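/- Let F₁, F₂ ≤ F₀ be fields and write F = F₁ ∩ F₂. Let 𝒱 = (V₀, V₁, V₂) be a vector space patching problem for (F₀, F₁, F₂): finite dimensional Fᵢ-vector spaces Vᵢ together with Fᵢ-linear maps νᵢ : Vᵢ → V₀ (i = 1,2) such that the induced F₀-linear maps Vᵢ ⊗_{Fᵢ} F₀ → V₀ are isomorphisms. Let V = V₁ ∩ V₂ inside V₀ (identifying Vᵢ with its image under νᵢ). Then the patching problem 𝒱 has a solution if and only if dim_F V equals the common dimension dim_{Fᵢ} Vᵢ of the patching problem; and in this case, V is a solution. -/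

import Mathlib

/-!
Statement 1 (Corollary 2.2 of Harbater–Hartmann, "Patching over fields"):
a vector space patching problem `(V₀, V₁, V₂)` for fields `F = F₁ ∩ F₂ ≤ F₁, F₂ ≤ F₀`
has a solution if and only if `dim_F (V₁ ∩ V₂) ` equals the dimension of the patching
problem; in that case `V₁ ∩ V₂` is a solution.
-/

open TensorProduct

section Solution

variable (F F₁ F₂ F₀ : Type) [Field F] [Field F₁] [Field F₂] [Field F₀]
  [Algebra F F₁] [Algebra F F₂] [Algebra F F₀] [Algebra F₁ F₀] [Algebra F₂ F₀]
  [IsScalarTower F F₁ F₀] [IsScalarTower F F₂ F₀]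
  (V₀ V₁ V₂ : Type) [AddCommGroup V₀] [Module F₀ V₀]
  [AddCommGroup V₁] [Module F₁ V₁] [AddCommGroup V₂] [Module F₂ V₂]
  [Module F₁ V₀] [IsScalarTower F₁ F₀ V₀] [Module F₂ V₀] [IsScalarTower F₂ F₀ V₀]
  (ν₁ : V₁ →ₗ[F₁] V₀) (ν₂ : V₂ →ₗ[F₂] V₀)

/-- `W` is a solution of the patching problem `(V₀, V₁, V₂; ν₁, ν₂)`: it is a finite
dimensional `F`-vector space equipped with compatible isomorphisms
`W ⊗_F Fᵢ ≅ Vᵢ` (`i = 0, 1, 2`); i.e. the patching problem induced by `W` is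
isomorphic to the given one. -/
def IsPatchingSolution (W : Type) [AddCommGroup W] [Module F W] : Prop :=
  FiniteDimensional F W ∧
  ∃ (α₁ : (F₁ ⊗[F] W) ≃ₗ[F₁] V₁) (α₂ : (F₂ ⊗[F] W) ≃ₗ[F₂] V₂)
      (α₀ : (F₀ ⊗[F] W) ≃ₗ[F₀] V₀),
    (LinearMap.liftBaseChange F₀ ν₁ ∘ₗ LinearMap.baseChange F₀ α₁.toLinearMap =
      α₀.toLinearMap ∘ₗ (AlgebraTensorModule.cancelBaseChange F F₁ F₀ F₀ W).toLinearMap) ∧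
    (LinearMap.liftBaseChange F₀ ν₂ ∘ₗ LinearMap.baseChange F₀ α₂.toLinearMap =
      α₀.toLinearMap ∘ₗ (AlgebraTensorModule.cancelBaseChange F F₂ F₀ F₀ W).toLinearMap)

end Solution

/-- Map sending a basis to a linearly independent family is injective. -/
lemma inj_of_basis {R M N ι : Type*} [Ring R] [AddCommGroup M] [AddCommGroup N]
    [Module R M] [Module R N] (b : Module.Basis ι R M) (f : M →ₗ[R] N)
    (h : LinearIndependent R (fun i => f (b i))) : Function.Injective f := by
  rw [← LinearMap.ker_eq_bot, eq_bot_iff]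
  intro x hx
  have hx0 : f x = 0 := hx
  have hrepr : f ((Finsupp.linearCombination R b) (b.repr x)) = 0 := by
    rw [b.linearCombination_repr]; exact hx0
  rw [Finsupp.apply_linearCombination] at hrepr
  have := linearIndependent_iff.mp h (b.repr x) hrepr
  have : x = 0 := by
    have := congrArg (Finsupp.linearCombination R b) this
    rwa [b.linearCombination_repr, map_zero] at this
  simpa using this

/-- L0: if `d` is `K`-linearly independent in `L` and `∑ d k ⊗ w k = 0` then each `w k = 0`. -/
lemma tmul_sum_eq_zero {K L : Type*} [Field K] [Field L] [Algebra K L] {V : Type*}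
    [AddCommGroup V] [Module K V] {κ : Type*} (d : κ → L) (hd : LinearIndependent K d)
    (t : Finset κ) (w : κ → V) (h : ∑ k ∈ t, d k ⊗ₜ[K] w k = 0) : ∀ k ∈ t, w k = 0 := by
  intro k₀ hk₀
  obtain ⟨π, hπ⟩ := (Submodule.span K (Set.range d)).subtype.exists_leftInverse_of_injective
    (Submodule.ker_subtype _)
  classical
  let f : L →ₗ[K] K := Finsupp.lapply k₀ ∘ₗ (hd.repr : _ →ₗ[K] (κ →₀ K)) ∘ₗ π
  have hf : ∀ k, f (d k) = if k = k₀ then 1 else 0 := by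
    intro k
    have h1 : π (d k) = ⟨d k, Submodule.subset_span ⟨k, rfl⟩⟩ := by
      have := LinearMap.congr_fun hπ ⟨d k, Submodule.subset_span ⟨k, rfl⟩⟩
      simpa using this
    have h2 : hd.repr ⟨d k, Submodule.subset_span ⟨k, rfl⟩⟩ = Finsupp.single k 1 :=
      hd.repr_eq_single k _ rfl
    simp [f, h1, h2, Finsupp.single_apply]
  have := congrArg ((TensorProduct.lid K V).toLinearMap ∘ₗ LinearMap.rTensor V f) h
  simp only [map_sum, LinearMap.coe_comp, Function.comp_apply, LinearMap.rTensor_tmul,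
    LinearEquiv.coe_coe, TensorProduct.lid_tmul, map_zero, hf, ite_smul, one_smul,
    zero_smul, Finset.sum_ite_eq', hk₀, if_true, LinearMap.map_zero] at this
  exact this

/-- L3: `m ↦ 1 ⊗ m` is injective for a field extension. -/
lemma one_tmul_injective {K L : Type*} [Field K] [Field L] [Algebra K L] {V : Type*}
    [AddCommGroup V] [Module K V] :
    Function.Injective (fun m : V => (1 : L) ⊗ₜ[K] m) := by
  intro m m' hmm
  have h : (1 : L) ⊗ₜ[K] (m - m') = 0 := by
    simp only at hmm
    rw [TensorProduct.tmul_sub, hmm, sub_self]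
  have hd : LinearIndependent K (fun _ : Unit => (1 : L)) :=
    linearIndependent_unique_iff.mpr one_ne_zero
  have := tmul_sum_eq_zero (fun _ : Unit => (1 : L)) hd {()} (fun _ => m - m')
    (by simpa using h) () (by simp)
  exact sub_eq_zero.mp this

set_option synthInstance.maxHeartbeats 400000 in
/-- L2: coefficients of a minimal relation lie in the subfield `K`. -/
lemma minimal_relation_coeffs_mem {F₀ : Type} [Field F₀] {V₀ : Type} [AddCommGroup V₀]
    [Module F₀ V₀] (K : Subfield F₀) (V' : Type) [AddCommGroup V'] [Module ↥K V']
    (ν : V' →ₗ[↥K] V₀) (hν : Function.Bijective (LinearMap.liftBaseChange F₀ ν))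
    {ι : Type} (v : ι → V₀) (s : Finset ι) (g : ι → F₀) (j₀ : ι) (hj₀ : j₀ ∈ s)
    (hg1 : g j₀ = 1)
    (hrel : ∑ i ∈ s, g i • v i = 0)
    (hmin : ∀ (t : Finset ι) (h : ι → F₀), t.Nonempty → (∀ i ∈ t, h i ≠ 0) →
      ∑ i ∈ t, h i • v i = 0 → s.card ≤ t.card)
    (hv : ∀ i ∈ s, v i ∈ Set.range ν) :
    ∀ i ∈ s, g i ∈ K := by
  classical
  -- choose preimages
  let w : ι → V' := fun i => if h : v i ∈ Set.range ν then h.choose else 0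
  have hw : ∀ i ∈ s, ν (w i) = v i := by
    intro i hi
    simp only [w, dif_pos (hv i hi)]
    exact (hv i hi).choose_spec
  -- tensor relation
  let e : (F₀ ⊗[↥K] V') ≃ₗ[F₀] V₀ := LinearEquiv.ofBijective _ hν
  have htens : ∑ i ∈ s, g i ⊗ₜ[↥K] w i = 0 := by
    apply e.injective
    rw [map_zero, map_sum]
    calc ∑ i ∈ s, e (g i ⊗ₜ[↥K] w i) = ∑ i ∈ s, g i • v i := by
          refine Finset.sum_congr rfl fun i hi => ?_
          show LinearMap.liftBaseChange F₀ ν (g i ⊗ₜ[↥K] w i) = _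
          rw [LinearMap.liftBaseChange_tmul, hw i hi]
      _ = 0 := hrel
  -- a basis of F₀ over K
  let b := Module.Basis.ofVectorSpace ↥K F₀
  let a : ι → Module.Basis.ofVectorSpaceIndex ↥K F₀ →₀ ↥K := fun i => b.repr (g i)
  let T : Finset (Module.Basis.ofVectorSpaceIndex ↥K F₀) := s.biUnion fun i => (a i).support
  have hTsub : ∀ i ∈ s, (a i).support ⊆ T :=
    fun i hi => Finset.subset_biUnion_of_mem (fun i => (a i).support) hi
  have hgsum : ∀ i ∈ s, g i = ∑ k ∈ T, a i k • (b k : F₀) := by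
    intro i hi
    have h0 := b.linearCombination_repr (g i)
    rw [Finsupp.linearCombination_apply, Finsupp.sum] at h0
    rw [← h0, Finset.sum_subset (hTsub i hi)]
    intro k _ hk
    rw [Finsupp.notMem_support_iff.mp hk, zero_smul]
  -- regroup the tensor relation
  have htens2 : ∑ k ∈ T, (b k : F₀) ⊗ₜ[↥K] (∑ i ∈ s, a i k • w i) = 0 := by
    calc ∑ k ∈ T, (b k : F₀) ⊗ₜ[↥K] (∑ i ∈ s, a i k • w i)
        = ∑ k ∈ T, ∑ i ∈ s, a i k • ((b k : F₀) ⊗ₜ[↥K] w i) := by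
          refine Finset.sum_congr rfl fun k _ => ?_
          rw [TensorProduct.tmul_sum]
          exact Finset.sum_congr rfl fun i _ => TensorProduct.tmul_smul _ _ _
      _ = ∑ i ∈ s, ∑ k ∈ T, a i k • ((b k : F₀) ⊗ₜ[↥K] w i) := Finset.sum_comm
      _ = ∑ i ∈ s, g i ⊗ₜ[↥K] w i := by
          refine Finset.sum_congr rfl fun i hi => ?_
          rw [hgsum i hi, TensorProduct.sum_tmul]
          exact Finset.sum_congr rfl fun k _ => (TensorProduct.smul_tmul' _ _ _).symm
      _ = 0 := htens
  have hWzero : ∀ k ∈ T, ∑ i ∈ s, a i k • w i = 0 :=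
    tmul_sum_eq_zero (fun k => (b k : F₀)) (b.linearIndependent) T _ htens2
  -- the coordinate where the representation of 1 = g j₀ is nonzero
  have haj₀ : a j₀ ≠ 0 := by
    intro h0
    have := congrArg (fun l => Finsupp.linearCombination ↥K (fun k => (b k : F₀)) l) h0
    simp only [map_zero] at this
    rw [show Finsupp.linearCombination ↥K (fun k => (b k : F₀)) (a j₀) = g j₀ from
      b.linearCombination_repr (g j₀)] at this
    rw [hg1] at this
    exact one_ne_zero this
  obtain ⟨k₀, hk₀⟩ := Finsupp.ne_iff.mp haj₀
  rw [Finsupp.coe_zero, Pi.zero_apply] at hk₀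
  have hk₀T : k₀ ∈ T := hTsub j₀ hj₀ (Finsupp.mem_support_iff.mpr hk₀)
  -- new relation with coefficients in K
  have hrel2 : ∑ i ∈ s, ((a i k₀ : ↥K) : F₀) • v i = 0 := by
    calc ∑ i ∈ s, ((a i k₀ : ↥K) : F₀) • v i
        = ∑ i ∈ s, ν (a i k₀ • w i) := by
          refine Finset.sum_congr rfl fun i hi => ?_
          rw [map_smul, ← hw i hi]
          rfl
      _ = ν (∑ i ∈ s, a i k₀ • w i) := (map_sum ν _ _).symm
      _ = 0 := by rw [hWzero k₀ hk₀T, map_zero]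
  -- scale it to have coefficient 1 at j₀
  set c₀ : F₀ := ((a j₀ k₀ : ↥K) : F₀) with hc₀def
  have hc₀ : c₀ ≠ 0 := fun h => hk₀ (Subtype.ext h)
  set g' : ι → F₀ := fun i => c₀⁻¹ * ((a i k₀ : ↥K) : F₀) with hg'def
  have hrel3 : ∑ i ∈ s, g' i • v i = 0 := by
    calc ∑ i ∈ s, g' i • v i = c₀⁻¹ • ∑ i ∈ s, ((a i k₀ : ↥K) : F₀) • v i := by
          rw [Finset.smul_sum]
          exact Finset.sum_congr rfl fun i _ => by rw [smul_smul]
      _ = 0 := by rw [hrel2, smul_zero]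
  have hg'j₀ : g' j₀ = 1 := by
    simp only [hg'def]
    exact inv_mul_cancel₀ hc₀
  -- uniqueness of the minimal relation: g = g' on s
  have huniq : ∀ i ∈ s, g i = g' i := by
    by_contra hne
    push_neg at hne
    obtain ⟨i₁, hi₁s, hi₁⟩ := hne
    set h : ι → F₀ := fun i => g i - g' i with hhdef
    have hsum : ∑ i ∈ s, h i • v i = 0 := by
      calc ∑ i ∈ s, h i • v i = ∑ i ∈ s, (g i • v i - g' i • v i) :=
            Finset.sum_congr rfl fun i _ => sub_smul _ _ _
        _ = (∑ i ∈ s, g i • v i) - ∑ i ∈ s, g' i • v i := Finset.sum_sub_distrib _ _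
        _ = 0 := by rw [hrel, hrel3, sub_zero]
    set s' : Finset ι := s.filter fun i => h i ≠ 0 with hs'def
    have hs'sum : ∑ i ∈ s', h i • v i = 0 := by
      rw [← hsum]
      apply Finset.sum_filter_of_ne
      intro i _ hne0 h0
      exact hne0 (by rw [h0, zero_smul])
    have hs'ne : s'.Nonempty := ⟨i₁, Finset.mem_filter.mpr ⟨hi₁s, sub_ne_zero.mpr hi₁⟩⟩
    have hcard := hmin s' h hs'ne (fun i hi => (Finset.mem_filter.mp hi).2) hs'sum
    have hj₀s' : j₀ ∉ s' := by
      simp only [hs'def, Finset.mem_filter, not_and, Decidable.not_not]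
      intro _
      rw [hhdef]
      simp only [hg1, hg'j₀, sub_self]
    have : s'.card < s.card :=
      Finset.card_lt_card (Finset.ssubset_iff_of_subset (Finset.filter_subset _ _)
        |>.mpr ⟨j₀, hj₀, hj₀s'⟩)
    omega
  intro i hi
  rw [huniq i hi, hg'def]
  exact K.mul_mem (K.inv_mem (a j₀ k₀).2) (a i k₀).2

/-- L1: vectors in `V₁ ∩ V₂` that are independent over `F₁ ⊓ F₂` are independent over `F₀`. -/
lemma linearIndependent_of_mem_inter {F₀ : Type} [Field F₀] (F₁ F₂ : Subfield F₀)
    {V₀ V₁ V₂ : Type} [AddCommGroup V₀] [Module F₀ V₀]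
    [AddCommGroup V₁] [Module ↥F₁ V₁] [AddCommGroup V₂] [Module ↥F₂ V₂]
    (ν₁ : V₁ →ₗ[↥F₁] V₀) (ν₂ : V₂ →ₗ[↥F₂] V₀)
    (hν₁ : Function.Bijective (LinearMap.liftBaseChange F₀ ν₁))
    (hν₂ : Function.Bijective (LinearMap.liftBaseChange F₀ ν₂))
    {ι : Type} (v : ι → V₀) (hv : ∀ i, v i ∈ Set.range ν₁ ∩ Set.range ν₂)
    (hli : LinearIndependent ↥(F₁ ⊓ F₂) v) : LinearIndependent F₀ v := by
  classical
  rw [linearIndependent_iff'] at hli ⊢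
  by_contra hcon
  push_neg at hcon
  obtain ⟨s₀, g₀, hrel₀, i₀, hi₀s, hi₀⟩ := hcon
  -- restrict to nonzero coefficients
  let P : ℕ → Prop := fun n => ∃ (t : Finset ι) (h : ι → F₀), t.card = n ∧ t.Nonempty ∧
    (∀ i ∈ t, h i ≠ 0) ∧ ∑ i ∈ t, h i • v i = 0
  have hP : P (s₀.filter fun i => g₀ i ≠ 0).card := by
    refine ⟨_, g₀, rfl, ⟨i₀, Finset.mem_filter.mpr ⟨hi₀s, hi₀⟩⟩,
      fun i hi => (Finset.mem_filter.mp hi).2, ?_⟩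
    rw [← hrel₀]
    apply Finset.sum_filter_of_ne
    intro i _ hne0 h0
    exact hne0 (by rw [h0, zero_smul])
  obtain ⟨s, g, hcards, hsne, hgne, hrel⟩ := Nat.find_spec (⟨_, hP⟩ : ∃ n, P n)
  have hmin : ∀ (t : Finset ι) (h : ι → F₀), t.Nonempty → (∀ i ∈ t, h i ≠ 0) →
      ∑ i ∈ t, h i • v i = 0 → s.card ≤ t.card := by
    intro t h htne hhne hrel'
    rw [hcards]
    by_contra hlt
    exact Nat.find_min (⟨_, hP⟩ : ∃ n, P n) (lt_of_not_ge hlt) ⟨t, h, rfl, htne, hhne, hrel'⟩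
  obtain ⟨j₀, hj₀⟩ := hsne
  -- normalize
  set g' : ι → F₀ := fun i => (g j₀)⁻¹ * g i with hg'def
  have hg'rel : ∑ i ∈ s, g' i • v i = 0 := by
    calc ∑ i ∈ s, g' i • v i = (g j₀)⁻¹ • ∑ i ∈ s, g i • v i := by
          rw [Finset.smul_sum]
          exact Finset.sum_congr rfl fun i _ => by rw [smul_smul]
      _ = 0 := by rw [hrel, smul_zero]
  have hg'1 : g' j₀ = 1 := inv_mul_cancel₀ (hgne j₀ hj₀)
  have hmem1 := minimal_relation_coeffs_mem F₁ V₁ ν₁ hν₁ v s g' j₀ hj₀ hg'1 hg'rel hmin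
    (fun i hi => (hv i).1)
  have hmem2 := minimal_relation_coeffs_mem F₂ V₂ ν₂ hν₂ v s g' j₀ hj₀ hg'1 hg'rel hmin
    (fun i hi => (hv i).2)
  -- contradiction with independence over F₁ ⊓ F₂
  let c : ι → ↥(F₁ ⊓ F₂) := fun i =>
    if h : g' i ∈ F₁ ⊓ F₂ then (⟨g' i, h⟩ : ↥(F₁ ⊓ F₂)) else 0
  have hc : ∀ i ∈ s, (c i : F₀) = g' i := by
    intro i hi
    have : g' i ∈ F₁ ⊓ F₂ := Subfield.mem_inf.mpr ⟨hmem1 i hi, hmem2 i hi⟩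
    simp only [c, dif_pos this]
  have hcrel : ∑ i ∈ s, c i • v i = 0 := by
    rw [← hg'rel]
    refine Finset.sum_congr rfl fun i hi => ?_
    rw [← hc i hi]
    rfl
  have h2 : ((c j₀ : ↥(F₁ ⊓ F₂)) : F₀) = 0 := by
    rw [hli s c hcrel j₀ hj₀, ZeroMemClass.coe_zero]
  rw [hc j₀ hj₀, hg'1] at h2
  exact one_ne_zero h2

set_option synthInstance.maxHeartbeats 400000 in
/-- Construction of the injective comparison map `K ⊗[F] W →ₗ[K] V'`. -/
lemma exists_beta (F₀ : Type) [Field F₀] (K : Subfield F₀)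
    (F : Type) [Field F] [Algebra F ↥K] [Algebra F F₀] [IsScalarTower F ↥K F₀]
    (V₀ V' : Type) [AddCommGroup V₀] [Module F₀ V₀] [AddCommGroup V'] [Module ↥K V']
    [Module F V₀] [IsScalarTower F F₀ V₀]
    (ν : V' →ₗ[↥K] V₀) (hνinj : Function.Injective ν)
    (W : Type) [AddCommGroup W] [Module F W]
    (j : W →ₗ[F] V₀) (hj : ∀ w, j w ∈ Set.range ν)
    (hind : ∀ (κ : Type) (u : κ → W), LinearIndependent F u →
      LinearIndependent F₀ (fun k => j (u k))) :
    ∃ β : (↥K ⊗[F] W) →ₗ[↥K] V', Function.Injective β ∧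
      ∀ (k : ↥K) (x : W), ν (β (k ⊗ₜ[F] x)) = k • j x := by
  classical
  letI : Module F V' := Module.compHom V' (algebraMap F ↥K)
  have hFsmul : ∀ (c : F) (y : V'), c • y = (algebraMap F ↥K c) • y := fun _ _ => rfl
  letI : IsScalarTower F ↥K V' := ⟨fun c k y => by
    rw [hFsmul, Algebra.smul_def, mul_smul]⟩
  have halg : ∀ (c : F) (x : V₀), (algebraMap F ↥K c) • x = c • x := by
    intro c x
    have h1 : (algebraMap F ↥K c) • x = (algebraMap ↥K F₀ (algebraMap F ↥K c)) • x := rfl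
    rw [h1, ← IsScalarTower.algebraMap_apply F ↥K F₀, algebraMap_smul]
  -- the F-linear lift ψ : W → V'
  let f : W → V' := fun w => (hj w).choose
  have hf : ∀ w, ν (f w) = j w := fun w => (hj w).choose_spec
  let ψ : W →ₗ[F] V' :=
    { toFun := f
      map_add' := by
        intro w w'
        apply hνinj
        rw [map_add, hf, hf, hf, map_add]
      map_smul' := by
        intro c w
        simp only [RingHom.id_apply]
        apply hνinj
        show ν (f (c • w)) = ν (c • f w)
        rw [hf, map_smul, hFsmul, map_smul, hf, halg] }
  refine ⟨LinearMap.liftBaseChange ↥K ψ, ?_, ?_⟩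
  · -- injectivity
    let bW := Module.Basis.ofVectorSpace F W
    have h1 : LinearIndependent F₀ (fun k => j (bW k)) := hind _ _ bW.linearIndependent
    have h2 : LinearIndependent ↥K (fun k => j (bW k)) := by
      refine h1.restrict_scalars ?_
      intro r r' hrr
      have h : (r : F₀) * 1 = (r' : F₀) * 1 := hrr
      rw [mul_one, mul_one] at h
      exact Subtype.ext h
    have h3 : LinearIndependent ↥K (fun k => ψ (bW k)) := by
      refine LinearIndependent.of_comp ν ?_
      have : (⇑ν ∘ fun k => ψ (bW k)) = fun k => j (bW k) := by
        funext k
        exact hf (bW k)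
      rw [this]
      exact h2
    refine inj_of_basis (bW.baseChange ↥K) _ ?_
    have : (fun i => LinearMap.liftBaseChange ↥K ψ (bW.baseChange ↥K i)) =
        fun i => ψ (bW i) := by
      funext i
      rw [Module.Basis.baseChange_apply, LinearMap.liftBaseChange_tmul, one_smul]
    rw [this]
    exact h3
  · intro k x
    rw [LinearMap.liftBaseChange_tmul, map_smul]
    exact congrArg (k • ·) (hf x)

set_option maxHeartbeats 4000000 in
set_option synthInstance.maxHeartbeats 400000 in
/-- Let `F₁, F₂ ≤ F₀` be fields and `F = F₁ ∩ F₂`.  A patching problem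
`(V₀, V₁, V₂; ν₁, ν₂)` of finite dimensional vector spaces (where the base-changed maps
`Vᵢ ⊗_{Fᵢ} F₀ → V₀` are isomorphisms) has a solution if and only if the dimension over `F`
of `V = V₁ ∩ V₂` (inside `V₀`) equals the common dimension of the patching problem;
and in that case `V` is a solution. -/
theorem patching_problem_solution_iff_dim
    (F₀ : Type) [Field F₀] (F₁ F₂ : Subfield F₀)
    (V₀ V₁ V₂ : Type) [AddCommGroup V₀] [Module F₀ V₀]
    [AddCommGroup V₁] [Module ↥F₁ V₁] [AddCommGroup V₂] [Module ↥F₂ V₂]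
    [FiniteDimensional F₀ V₀] [FiniteDimensional ↥F₁ V₁] [FiniteDimensional ↥F₂ V₂]
    (ν₁ : V₁ →ₗ[↥F₁] V₀) (ν₂ : V₂ →ₗ[↥F₂] V₀)
    (hν₁ : Function.Bijective (LinearMap.liftBaseChange F₀ ν₁))
    (hν₂ : Function.Bijective (LinearMap.liftBaseChange F₀ ν₂))
    (V : Submodule ↥(F₁ ⊓ F₂) V₀)
    (hV : (V : Set V₀) = Set.range ν₁ ∩ Set.range ν₂) :
    letI : Algebra ↥(F₁ ⊓ F₂) ↥F₁ :=
      (Subfield.inclusion (inf_le_left : F₁ ⊓ F₂ ≤ F₁)).toAlgebra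
    letI : Algebra ↥(F₁ ⊓ F₂) ↥F₂ :=
      (Subfield.inclusion (inf_le_right : F₁ ⊓ F₂ ≤ F₂)).toAlgebra
    letI : IsScalarTower ↥(F₁ ⊓ F₂) ↥F₁ F₀ := IsScalarTower.of_algebraMap_eq (fun x => rfl)
    letI : IsScalarTower ↥(F₁ ⊓ F₂) ↥F₂ F₀ := IsScalarTower.of_algebraMap_eq (fun x => rfl)
    ((∃ (W : Type) (_ : AddCommGroup W) (_ : Module ↥(F₁ ⊓ F₂) W),
        IsPatchingSolution ↥(F₁ ⊓ F₂) ↥F₁ ↥F₂ F₀ V₀ V₁ V₂ ν₁ ν₂ W) ↔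
      Module.finrank ↥(F₁ ⊓ F₂) ↥V = Module.finrank ↥F₁ V₁) ∧
    (Module.finrank ↥(F₁ ⊓ F₂) ↥V = Module.finrank ↥F₁ V₁ →
      IsPatchingSolution ↥(F₁ ⊓ F₂) ↥F₁ ↥F₂ F₀ V₀ V₁ V₂ ν₁ ν₂ ↥V) := by
  classical
  letI iA1 : Algebra ↥(F₁ ⊓ F₂) ↥F₁ :=
    (Subfield.inclusion (inf_le_left : F₁ ⊓ F₂ ≤ F₁)).toAlgebra
  letI iA2 : Algebra ↥(F₁ ⊓ F₂) ↥F₂ :=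
    (Subfield.inclusion (inf_le_right : F₁ ⊓ F₂ ≤ F₂)).toAlgebra
  letI iT1 : IsScalarTower ↥(F₁ ⊓ F₂) ↥F₁ F₀ := IsScalarTower.of_algebraMap_eq (fun x => rfl)
  letI iT2 : IsScalarTower ↥(F₁ ⊓ F₂) ↥F₂ F₀ := IsScalarTower.of_algebraMap_eq (fun x => rfl)
  have hmemV : ∀ x : ↥V, ((x : V₀) ∈ Set.range ν₁ ∧ (x : V₀) ∈ Set.range ν₂) := by
    intro x
    have hx : (x : V₀) ∈ (V : Set V₀) := x.2
    rw [hV] at hx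
    exact hx
  have hind : ∀ (κ : Type) (u : κ → ↥V), LinearIndependent ↥(F₁ ⊓ F₂) u →
      LinearIndependent F₀ (fun k => V.subtype (u k)) := by
    intro κ u hu
    exact linearIndependent_of_mem_inter F₁ F₂ ν₁ ν₂ hν₁ hν₂ _
      (fun k => ⟨(hmemV _).1, (hmemV _).2⟩) (hu.map' V.subtype V.ker_subtype)
  have hfinV : FiniteDimensional ↥(F₁ ⊓ F₂) ↥V := by
    let b := Module.Basis.ofVectorSpace ↥(F₁ ⊓ F₂) ↥V
    have h := hind _ b b.linearIndependent
    have : Finite (Module.Basis.ofVectorSpaceIndex ↥(F₁ ⊓ F₂) ↥V) := h.finite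
    exact Module.Finite.of_basis b
  set φ := LinearMap.liftBaseChange F₀ V.subtype with hφdef
  have hφtmul : ∀ (a : F₀) (x : ↥V), φ (a ⊗ₜ[↥(F₁ ⊓ F₂)] x) = a • (x : V₀) := by
    intro a x
    rw [hφdef, LinearMap.liftBaseChange_tmul]
    rfl
  have hφinj : Function.Injective φ := by
    let b := Module.Basis.ofVectorSpace ↥(F₁ ⊓ F₂) ↥V
    refine inj_of_basis (b.baseChange F₀) φ ?_
    have heq : (fun i => φ (b.baseChange F₀ i)) = fun i => V.subtype (b i) := by
      funext i
      rw [Module.Basis.baseChange_apply, hφtmul, one_smul]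
      rfl
    rw [heq]
    exact hind _ b b.linearIndependent
  have hn1 : Module.finrank ↥F₁ V₁ = Module.finrank F₀ V₀ := by
    rw [← Module.finrank_baseChange (R := F₀) (S := ↥F₁) (M' := V₁)]
    exact (LinearEquiv.ofBijective _ hν₁).finrank_eq
  have hn2 : Module.finrank ↥F₂ V₂ = Module.finrank F₀ V₀ := by
    rw [← Module.finrank_baseChange (R := F₀) (S := ↥F₂) (M' := V₂)]
    exact (LinearEquiv.ofBijective _ hν₂).finrank_eq
  have hVle : Module.finrank ↥(F₁ ⊓ F₂) ↥V ≤ Module.finrank F₀ V₀ := by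
    rw [← Module.finrank_baseChange (R := F₀) (S := ↥(F₁ ⊓ F₂)) (M' := ↥V)]
    exact LinearMap.finrank_le_finrank_of_injective hφinj
  have hν₁inj : Function.Injective ν₁ := by
    intro x y hxy
    refine one_tmul_injective (L := F₀) (hν₁.1 ?_)
    simp only []
    rw [LinearMap.liftBaseChange_tmul, LinearMap.liftBaseChange_tmul, one_smul, one_smul, hxy]
  have hν₂inj : Function.Injective ν₂ := by
    intro x y hxy
    refine one_tmul_injective (L := F₀) (hν₂.1 ?_)
    simp only []
    rw [LinearMap.liftBaseChange_tmul, LinearMap.liftBaseChange_tmul, one_smul, one_smul, hxy]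
  -- the main construction
  have main : Module.finrank ↥(F₁ ⊓ F₂) ↥V = Module.finrank ↥F₁ V₁ →
      IsPatchingSolution ↥(F₁ ⊓ F₂) ↥F₁ ↥F₂ F₀ V₀ V₁ V₂ ν₁ ν₂ ↥V := by
    intro hdim
    have hsurj : Function.Surjective φ := by
      have hr : Module.finrank F₀ (F₀ ⊗[↥(F₁ ⊓ F₂)] ↥V) = Module.finrank F₀ V₀ := by
        rw [Module.finrank_baseChange, hdim, hn1]
      exact (LinearMap.injective_iff_surjective_of_finrank_eq_finrank hr).mp hφinj
    let α₀ := LinearEquiv.ofBijective φ ⟨hφinj, hsurj⟩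
    obtain ⟨β₁, hβ₁inj, hβ₁⟩ := exists_beta F₀ F₁ ↥(F₁ ⊓ F₂) V₀ V₁ ν₁ hν₁inj ↥V V.subtype
      (fun w => (hmemV w).1) hind
    obtain ⟨β₂, hβ₂inj, hβ₂⟩ := exists_beta F₀ F₂ ↥(F₁ ⊓ F₂) V₀ V₂ ν₂ hν₂inj ↥V V.subtype
      (fun w => (hmemV w).2) hind
    have hβ₁surj : Function.Surjective β₁ := by
      have hr : Module.finrank ↥F₁ (↥F₁ ⊗[↥(F₁ ⊓ F₂)] ↥V) = Module.finrank ↥F₁ V₁ := by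
        rw [Module.finrank_baseChange, hdim]
      exact (LinearMap.injective_iff_surjective_of_finrank_eq_finrank hr).mp hβ₁inj
    have hβ₂surj : Function.Surjective β₂ := by
      have hr : Module.finrank ↥F₂ (↥F₂ ⊗[↥(F₁ ⊓ F₂)] ↥V) = Module.finrank ↥F₂ V₂ := by
        rw [Module.finrank_baseChange, hdim, hn1, hn2]
      exact (LinearMap.injective_iff_surjective_of_finrank_eq_finrank hr).mp hβ₂inj
    let α₁ := LinearEquiv.ofBijective β₁ ⟨hβ₁inj, hβ₁surj⟩
    let α₂ := LinearEquiv.ofBijective β₂ ⟨hβ₂inj, hβ₂surj⟩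
    refine ⟨hfinV, α₁, α₂, α₀, ?_, ?_⟩
    · apply LinearMap.ext
      intro z
      induction z using TensorProduct.induction_on with
      | zero => rw [map_zero, map_zero]
      | add x y hx hy => rw [map_add, map_add, hx, hy]
      | tmul a m =>
        simp only [LinearMap.comp_apply, LinearEquiv.coe_coe]
        induction m using TensorProduct.induction_on with
        | zero => simp only [tmul_zero, map_zero]
        | add x y hx hy => simp only [tmul_add, map_add, hx, hy]
        | tmul k x =>
          rw [LinearMap.baseChange_tmul, LinearMap.liftBaseChange_tmul,
            AlgebraTensorModule.cancelBaseChange_tmul]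
          simp only [LinearEquiv.coe_coe]
          have h1 : ∀ z, α₁ z = β₁ z := fun _ => rfl
          have h2 : ∀ z, α₀ z = φ z := fun _ => rfl
          rw [h1, h2, hβ₁, hφtmul]
          show a • ((k : F₀) • (x : V₀)) = ((k : F₀) * a) • (x : V₀)
          rw [smul_smul, mul_comm]
    · apply LinearMap.ext
      intro z
      induction z using TensorProduct.induction_on with
      | zero => rw [map_zero, map_zero]
      | add x y hx hy => rw [map_add, map_add, hx, hy]
      | tmul a m =>
        simp only [LinearMap.comp_apply, LinearEquiv.coe_coe]
        induction m using TensorProduct.induction_on with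
        | zero => simp only [tmul_zero, map_zero]
        | add x y hx hy => simp only [tmul_add, map_add, hx, hy]
        | tmul k x =>
          rw [LinearMap.baseChange_tmul, LinearMap.liftBaseChange_tmul,
            AlgebraTensorModule.cancelBaseChange_tmul]
          simp only [LinearEquiv.coe_coe]
          have h1 : ∀ z, α₂ z = β₂ z := fun _ => rfl
          have h2 : ∀ z, α₀ z = φ z := fun _ => rfl
          rw [h1, h2, hβ₂, hφtmul]
          show a • ((k : F₀) • (x : V₀)) = ((k : F₀) * a) • (x : V₀)
          rw [smul_smul, mul_comm]
  refine ⟨⟨?_, fun hdim => ⟨↥V, inferInstance, inferInstance, main hdim⟩⟩, main⟩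
  rintro ⟨W, iW1, iW2, hfdW, α₁, α₂, α₀, hc₁, hc₂⟩
  letI := iW1
  letI := iW2
  have hWr : Module.finrank ↥(F₁ ⊓ F₂) W = Module.finrank ↥F₁ V₁ := by
    have h := α₁.finrank_eq
    rwa [Module.finrank_baseChange] at h
  -- the image of W in V₀ lands in V
  have hmemW : ∀ w : W, α₀ ((1 : F₀) ⊗ₜ[↥(F₁ ⊓ F₂)] w) ∈ V := by
    intro w
    have h1 := LinearMap.congr_fun hc₁ ((1 : F₀) ⊗ₜ[↥F₁] ((1 : ↥F₁) ⊗ₜ[↥(F₁ ⊓ F₂)] w))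
    have h2 := LinearMap.congr_fun hc₂ ((1 : F₀) ⊗ₜ[↥F₂] ((1 : ↥F₂) ⊗ₜ[↥(F₁ ⊓ F₂)] w))
    simp only [LinearMap.comp_apply, LinearEquiv.coe_coe, LinearMap.baseChange_tmul,
      LinearMap.liftBaseChange_tmul, one_smul, AlgebraTensorModule.cancelBaseChange_tmul] at h1 h2
    rw [← SetLike.mem_coe, hV]
    constructor
    · exact ⟨α₁ ((1 : ↥F₁) ⊗ₜ[↥(F₁ ⊓ F₂)] w), h1⟩
    · exact ⟨α₂ ((1 : ↥F₂) ⊗ₜ[↥(F₁ ⊓ F₂)] w), h2⟩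
  -- θ : W →ₗ[F] V
  have hsmulz : ∀ (c : ↥(F₁ ⊓ F₂)) (z : F₀ ⊗[↥(F₁ ⊓ F₂)] W), α₀ (c • z) = c • (α₀ z) := by
    intro c z
    have h1 : c • z = (algebraMap ↥(F₁ ⊓ F₂) F₀ c) • z := (algebraMap_smul F₀ c z).symm
    have h2 : c • (α₀ z) = (algebraMap ↥(F₁ ⊓ F₂) F₀ c) • (α₀ z) :=
      (algebraMap_smul F₀ c (α₀ z)).symm
    rw [h1, h2, map_smul]
  let θ : W →ₗ[↥(F₁ ⊓ F₂)] ↥V :=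
    { toFun := fun w => ⟨α₀ ((1 : F₀) ⊗ₜ[↥(F₁ ⊓ F₂)] w), hmemW w⟩
      map_add' := by
        intro w w'
        apply Subtype.ext
        show α₀ ((1 : F₀) ⊗ₜ[↥(F₁ ⊓ F₂)] (w + w')) = _
        rw [tmul_add, map_add]
        rfl
      map_smul' := by
        intro c w
        apply Subtype.ext
        show α₀ ((1 : F₀) ⊗ₜ[↥(F₁ ⊓ F₂)] (c • w)) = c • (α₀ ((1 : F₀) ⊗ₜ[↥(F₁ ⊓ F₂)] w))
        have h5 : (1 : F₀) ⊗ₜ[↥(F₁ ⊓ F₂)] (c • w) = c • ((1 : F₀) ⊗ₜ[↥(F₁ ⊓ F₂)] w) :=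
          map_smul (TensorProduct.mk ↥(F₁ ⊓ F₂) F₀ W 1) c w
        rw [h5, hsmulz] }
  have hθinj : Function.Injective θ := by
    intro w w' h
    have h' : α₀ ((1 : F₀) ⊗ₜ[↥(F₁ ⊓ F₂)] w) = α₀ ((1 : F₀) ⊗ₜ[↥(F₁ ⊓ F₂)] w') :=
      congrArg (fun y : ↥V => (y : V₀)) h
    exact one_tmul_injective (α₀.injective h')
  have le1 : Module.finrank ↥(F₁ ⊓ F₂) W ≤ Module.finrank ↥(F₁ ⊓ F₂) ↥V :=
    LinearMap.finrank_le_finrank_of_injective hθinj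
  refine le_antisymm ?_ ?_
  · rw [hn1]
    exact hVle
  · rw [← hWr]
    exact le1
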